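/- arXiv:1704.04254 — 2 statements merged into one kernel-verified Lean document; each statement's English description precedes it below -/
import Mathlib

section
/- Let γ, β ∈ (0,1), 0 < d < π/4, λ₁ > 0 and 0 < b < λ₁/√2. Assume there is a constant C₀ > 0 such that |e_{γ,1}(w)| ≤ C₀/(1+|w|) for every w ∈ ℂ with Re w ≤ 0. Then there exists a constant C > 0, depending only on γ, β, d, b, λ₁ and C₀, such that for every t > 0, every real λ ≥ λ₁ and every u ∈ ℝ one has ∫_{−d}^{d} |g_λ(u + i w, t)| dw ≤ C · t^{−γ}. -/
/-- Two-parameter Mittag-Leffler function `e_{γ,μ}(z) = ∑ₖ zᵏ / Γ(kγ+μ)`,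
with the reciprocal Gamma interpreted as `0` at non-positive integers. -/
noncomputable def mlf (γ μ : ℝ) (z : ℂ) : ℂ :=
  ∑' k : ℕ, (Complex.Gamma (((k : ℝ) * γ + μ : ℝ) : ℂ))⁻¹ * z ^ k

/-- Hyperbolic contour `z(y) = b (cosh y + i sinh y)`. -/
noncomputable def zc (b : ℝ) (y : ℂ) : ℂ :=
  (b : ℂ) * (Complex.cosh y + Complex.I * Complex.sinh y)

/-- Derivative of the hyperbolic contour, `z'(y) = b (sinh y + i cosh y)`. -/
noncomputable def zcDeriv (b : ℝ) (y : ℂ) : ℂ :=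
  (b : ℂ) * (Complex.sinh y + Complex.I * Complex.cosh y)


/-- The function `g_λ(y,t) = e_{γ,1}(-t^γ z(y)^β) · z'(y) · (z(y) - λ)⁻¹`. -/
noncomputable def gfun (γ β b t lam : ℝ) (y : ℂ) : ℂ :=
  mlf γ 1 (-(((t ^ γ : ℝ) : ℂ) * zc b y ^ (β : ℂ))) * zcDeriv b y * (zc b y - (lam : ℂ))⁻¹

lemma zc_eq' (b u w : ℝ) : zc b (u + w*Complex.I) =
    ((b*Real.cosh u*(Real.cos w - Real.sin w) : ℝ) : ℂ)
      + ((b*Real.sinh u*(Real.cos w + Real.sin w) : ℝ) : ℂ)*Complex.I := by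
  simp [zc, Complex.cosh_add, Complex.sinh_add, Complex.cosh_mul_I, Complex.sinh_mul_I,
    ← Complex.ofReal_cosh, ← Complex.ofReal_sinh, ← Complex.ofReal_cos, ← Complex.ofReal_sin]
  push_cast
  ring_nf
  simp [Complex.I_sq]
  ring

lemma zcDeriv_eq' (b u w : ℝ) : zcDeriv b (u + w*Complex.I) =
    ((b*Real.sinh u*(Real.cos w - Real.sin w) : ℝ) : ℂ)
      + ((b*Real.cosh u*(Real.cos w + Real.sin w) : ℝ) : ℂ)*Complex.I := by
  simp [zcDeriv, Complex.cosh_add, Complex.sinh_add, Complex.cosh_mul_I, Complex.sinh_mul_I,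
    ← Complex.ofReal_cosh, ← Complex.ofReal_sinh, ← Complex.ofReal_cos, ← Complex.ofReal_sin]
  push_cast
  ring_nf
  simp [Complex.I_sq]
  ring

lemma cosh_le_aux' (u : ℝ) (h : 0 ≤ u) : Real.cosh u ≤ 1 + Real.sinh u := by
  have : Real.cosh u - Real.sinh u = Real.exp (-u) := by
    rw [Real.cosh_eq, Real.sinh_eq]; ring
  have h2 : Real.exp (-u) ≤ 1 := Real.exp_le_one_iff.mpr (by linarith)
  linarith

lemma cosh_le' (u : ℝ) : Real.cosh u ≤ 1 + |Real.sinh u| := by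
  rcases le_or_gt 0 u with h | h
  · rw [abs_of_nonneg (Real.sinh_nonneg_iff.mpr h)]; exact cosh_le_aux' u h
  · have h1 := cosh_le_aux' (-u) (by linarith)
    rw [Real.cosh_neg, Real.sinh_neg] at h1
    calc Real.cosh u ≤ 1 + -Real.sinh u := h1
      _ ≤ 1 + |Real.sinh u| := by linarith [neg_le_abs (Real.sinh u)]

lemma trig1' (d w : ℝ) (hd : 0 < d) (hd' : d < Real.pi/4) (hw : |w| ≤ d) :
    Real.cos d - Real.sin d ≤ Real.cos w - Real.sin w ∧
    Real.cos d - Real.sin d ≤ Real.cos w + Real.sin w ∧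
    Real.cos w - Real.sin w ≤ Real.sqrt 2 ∧ Real.cos w + Real.sin w ≤ Real.sqrt 2 := by
  have hpi := Real.pi_pos
  obtain ⟨hw1, hw2⟩ := abs_le.mp hw
  have hcos : Real.cos d ≤ Real.cos w := by
    have : Real.cos |w| ≥ Real.cos d :=
      Real.cos_le_cos_of_nonneg_of_le_pi (abs_nonneg w) (by linarith) hw
    rwa [Real.cos_abs] at this
  have hsinle : Real.sin w ≤ Real.sin d :=
    Real.sin_le_sin_of_le_of_le_pi_div_two (by linarith) (by linarith) hw2
  have hsinge : -Real.sin d ≤ Real.sin w := by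
    have := Real.sin_le_sin_of_le_of_le_pi_div_two (by linarith) (by linarith) hw1
    rwa [Real.sin_neg] at this
  have hsq : (Real.cos w - Real.sin w)^2 + (Real.cos w + Real.sin w)^2 = 2 := by
    have := Real.sin_sq_add_cos_sq w; nlinarith
  have hs2 : Real.sqrt 2 ^ 2 = 2 := Real.sq_sqrt (by norm_num)
  have hs2' : (1:ℝ) ≤ Real.sqrt 2 := by nlinarith [Real.sqrt_nonneg 2]
  refine ⟨by linarith, by linarith, ?_, ?_⟩ <;>
    nlinarith [sq_nonneg (Real.cos w + Real.sin w), sq_nonneg (Real.cos w - Real.sin w)]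

lemma trig2' (d : ℝ) (hd : 0 < d) (hd' : d < Real.pi/4) : 0 < Real.cos d - Real.sin d := by
  have hpi := Real.pi_pos
  have h1 : Real.sin d < Real.sin (Real.pi/4) :=
    Real.sin_lt_sin_of_lt_of_le_pi_div_two (by linarith) (by linarith) hd'
  have h2 : Real.cos (Real.pi/4) < Real.cos d :=
    Real.cos_lt_cos_of_nonneg_of_le_pi hd.le (by linarith) hd'
  rw [Real.sin_pi_div_four] at h1; rw [Real.cos_pi_div_four] at h2
  linarith

lemma cpow_re_nonneg' (z : ℂ) (hz : 0 < z.re) (β : ℝ) (hβ0 : 0 < β) (hβ1 : β < 1) :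
    0 ≤ (z ^ (β:ℂ)).re := by
  have hz0 : z ≠ 0 := by intro h; simp [h] at hz
  rw [Complex.cpow_def_of_ne_zero hz0, Complex.exp_re]
  have harg : |Complex.arg z| < Real.pi / 2 := by
    rw [Complex.abs_arg_lt_pi_div_two_iff]; exact Or.inl hz
  have him : (Complex.log z * (β:ℂ)).im = Complex.arg z * β := by
    simp [Complex.log_im]
  rw [him]
  have hcos : 0 ≤ Real.cos (Complex.arg z * β) := by
    apply Real.cos_nonneg_of_mem_Icc
    obtain ⟨h1, h2⟩ := abs_le.mp harg.le
    constructor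
    · nlinarith [Real.pi_pos]
    · nlinarith [Real.pi_pos]
  positivity

lemma abs_le_of_sq_le' (x K : ℝ) (hK : 0 ≤ K) (h : x^2 ≤ K^2) : |x| ≤ K := by
  nlinarith [sq_abs x, abs_nonneg x]

lemma le_abs_of_sq_le' (m x : ℝ) (hm : 0 ≤ m) (h : m^2 ≤ x^2) : m ≤ |x| := by
  nlinarith [sq_abs x, abs_nonneg x]

/-- Pointwise bound on `|g|`. -/
lemma ml_bound (γ β t C₀ q : ℝ) (z : ℂ)
    (hβ0 : 0 < β) (hβ1 : β < 1) (ht : 0 < t) (hC₀ : 0 < C₀) (hq : 0 < q)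
    (hml : ∀ v : ℂ, v.re ≤ 0 → ‖mlf γ 1 v‖ ≤ C₀ / (1 + ‖v‖))
    (hzre : 0 < z.re) (hzlow : q ≤ ‖z‖) :
    ‖mlf γ 1 (-(((t ^ γ : ℝ) : ℂ) * z ^ (β:ℂ)))‖ ≤ C₀ * (q ^ β)⁻¹ * t ^ (-γ) := by
  have htγ : 0 < t ^ γ := Real.rpow_pos_of_pos ht γ
  have hqb : 0 < q ^ β := Real.rpow_pos_of_pos hq β
  have hw₀re : (-(((t ^ γ : ℝ) : ℂ) * z ^ (β:ℂ))).re ≤ 0 := by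
    have h1 : 0 ≤ (z ^ (β:ℂ)).re := cpow_re_nonneg' z hzre β hβ0 hβ1
    have h2 : 0 ≤ t ^ γ * (z ^ (β:ℂ)).re := mul_nonneg htγ.le h1
    simp only [Complex.neg_re, Complex.mul_re, Complex.ofReal_re, Complex.ofReal_im]
    simp only [zero_mul, sub_zero]
    linarith
  have hw₀abs : ‖-(((t ^ γ : ℝ) : ℂ) * z ^ (β:ℂ))‖ = t ^ γ * ‖z‖ ^ β := by
    rw [norm_neg, norm_mul, Complex.norm_real, Real.norm_eq_abs, abs_of_pos htγ, Complex.norm_cpow_real]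
  have hw₀low : t ^ γ * q ^ β ≤ ‖-(((t ^ γ : ℝ) : ℂ) * z ^ (β:ℂ))‖ := by
    rw [hw₀abs]
    exact mul_le_mul_of_nonneg_left (Real.rpow_le_rpow hq.le hzlow hβ0.le) htγ.le
  have h1 := hml _ hw₀re
  have h2 : C₀ / (1 + ‖-(((t ^ γ : ℝ) : ℂ) * z ^ (β:ℂ))‖)
      ≤ C₀ / (t ^ γ * q ^ β) := by
    apply div_le_div_of_nonneg_left hC₀.le (by positivity)
    linarith
  have h3 : C₀ / (t ^ γ * q ^ β) = C₀ * (q ^ β)⁻¹ * t ^ (-γ) := by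
    rw [Real.rpow_neg ht.le, div_eq_mul_inv, mul_inv]
    ring
  linarith

set_option maxHeartbeats 1600000 in
lemma key_bound (γ β b t lam u w C₀ c1 s2 r K m δ : ℝ)
    (hβ0 : 0 < β) (hβ1 : β < 1) (hb : 0 < b) (hC₀ : 0 < C₀) (hc1 : 0 < c1)
    (ht : 0 < t)
    (hml : ∀ v : ℂ, v.re ≤ 0 → ‖mlf γ 1 v‖ ≤ C₀ / (1 + ‖v‖))
    (ht1 : c1 ≤ Real.cos w - Real.sin w) (ht2 : c1 ≤ Real.cos w + Real.sin w)
    (ht3 : Real.cos w - Real.sin w ≤ s2)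
    (htrig : (Real.cos w - Real.sin w)^2 + (Real.cos w + Real.sin w)^2 = 2)
    (hK : 1 < K) (hr : 0 < r) (hm : 0 < m) (hm2 : m^2 = K^2 - 1)
    (hδ1 : δ ≤ r/(1+K)) (hδ2 : δ ≤ b*c1*(min 1 m)/2) (hδ : 0 < δ)
    (hlamr : s2*b*K ≤ lam - r) :
    ‖gfun γ β b t lam ((u : ℂ) + (w : ℂ) * Complex.I)‖
      ≤ (C₀ * ((b*c1) ^ β)⁻¹ * (2*b) / δ) * t ^ (-γ) := by
  have htγ : 0 < t ^ γ := Real.rpow_pos_of_pos ht γ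
  have htγ' : 0 < t ^ (-γ) := Real.rpow_pos_of_pos ht (-γ)
  have hbc1 : 0 < b * c1 := by positivity
  have hbc1b : 0 < (b*c1) ^ β := Real.rpow_pos_of_pos hbc1 β
  set ch := Real.cosh u with hchdef
  set sh := Real.sinh u with hshdef
  set cw := Real.cos w with hcwdef
  set sw := Real.sin w with hswdef
  have hch1 : 1 ≤ ch := Real.one_le_cosh u
  have hchpos : 0 < ch := by linarith
  have hshsq : sh^2 = ch^2 - 1 := by rw [hshdef, hchdef, Real.sinh_sq]
  have hchsh : ch ≤ 1 + |sh| := cosh_le' u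
  have habs0 : (0:ℝ) ≤ |sh| := abs_nonneg sh
  set A := b*ch*(cw - sw) with hAdef
  set B := b*sh*(cw + sw) with hBdef
  have hz : zc b ((u:ℂ) + (w:ℂ)*Complex.I) = (A:ℂ) + (B:ℂ)*Complex.I := zc_eq' b u w
  have hzd : zcDeriv b ((u:ℂ) + (w:ℂ)*Complex.I)
      = ((b*sh*(cw - sw) : ℝ):ℂ) + ((b*ch*(cw + sw) : ℝ):ℂ)*Complex.I := zcDeriv_eq' b u w
  have hA : b*c1*ch ≤ A := by
    have h := mul_le_mul_of_nonneg_left ht1 (mul_nonneg hb.le hchpos.le)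
    calc b*c1*ch = (b*ch)*c1 := by ring
      _ ≤ (b*ch)*(cw - sw) := h
      _ = A := by rw [hAdef]
  have hbc1A : b*c1 ≤ A := by
    have : b*c1*1 ≤ b*c1*ch := mul_le_mul_of_nonneg_left hch1 hbc1.le
    linarith
  have hApos : 0 < A := lt_of_lt_of_le hbc1 hbc1A
  have habs : ‖zc b ((u:ℂ) + (w:ℂ)*Complex.I)‖ = Real.sqrt (A^2 + B^2) := by
    rw [hz, Complex.norm_add_mul_I]
  have hzlow : b*c1 ≤ ‖zc b ((u:ℂ) + (w:ℂ)*Complex.I)‖ := by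
    rw [habs, show b*c1 = Real.sqrt ((b*c1)^2) from (Real.sqrt_sq hbc1.le).symm]
    apply Real.sqrt_le_sqrt
    have h1 : (b*c1)^2 ≤ A^2 := pow_le_pow_left₀ hbc1.le hbc1A 2
    linarith [sq_nonneg B]
  have hzpos : 0 < ‖zc b ((u:ℂ) + (w:ℂ)*Complex.I)‖ :=
    lt_of_lt_of_le hbc1 hzlow
  -- derivative bound
  have hzd_abs : ‖zcDeriv b ((u:ℂ) + (w:ℂ)*Complex.I)‖ ≤ 2*b*ch := by
    rw [hzd, Complex.norm_add_mul_I,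
      show 2*b*ch = Real.sqrt ((2*b*ch)^2) from (Real.sqrt_sq (by positivity)).symm]
    apply Real.sqrt_le_sqrt
    have hsh_le : sh^2 ≤ ch^2 := by rw [hshsq]; linarith
    have P : sh^2*(cw-sw)^2 ≤ ch^2*(cw-sw)^2 :=
      mul_le_mul_of_nonneg_right hsh_le (sq_nonneg _)
    have P2 : b^2*(sh^2*(cw-sw)^2) ≤ b^2*(ch^2*(cw-sw)^2) :=
      mul_le_mul_of_nonneg_left P (sq_nonneg b)
    have h3 : b^2*(ch^2*((cw-sw)^2+(cw+sw)^2)) = 2*(b^2*ch^2) := by rw [htrig]; ring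
    have h4 : 0 ≤ b^2*ch^2 := by positivity
    linarith [P2, h3, h4]
  -- gap bound
  have hgap : δ * (1 + |sh|) ≤ ‖zc b ((u:ℂ) + (w:ℂ)*Complex.I) - (lam:ℂ)‖ := by
    have hdiff : zc b ((u:ℂ) + (w:ℂ)*Complex.I) - (lam:ℂ)
        = ((A - lam : ℝ):ℂ) + (B:ℂ)*Complex.I := by
      rw [hz]; push_cast; ring
    rw [hdiff, Complex.norm_add_mul_I]
    rcases le_or_gt ch K with hcase | hcase
    · -- cosh small : real-part gap
      have hs2pos : 0 < s2 := by nlinarith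
      have hAle : A ≤ lam - r := by
        have h1 : A ≤ b*ch*s2 := by
          rw [hAdef]
          exact mul_le_mul_of_nonneg_left ht3 (mul_nonneg hb.le hchpos.le)
        have h2 : s2*b*ch ≤ s2*b*K :=
          mul_le_mul_of_nonneg_left hcase (mul_nonneg hs2pos.le hb.le)
        have h3 : b*ch*s2 = s2*b*ch := by ring
        linarith
      have hshK : |sh| ≤ K := by
        apply abs_le_of_sq_le' _ _ (by linarith)
        have : ch^2 ≤ K^2 := pow_le_pow_left₀ hchpos.le hcase 2
        linarith [hshsq]
      have hδle : δ * (1 + |sh|) ≤ r := by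
        calc δ * (1 + |sh|) ≤ (r/(1+K)) * (1+K) := by
              apply mul_le_mul hδ1 (by linarith) (by linarith) (by positivity)
          _ = r := by field_simp
      have hsq : r ≤ Real.sqrt ((A - lam)^2 + B^2) := by
        rw [show r = Real.sqrt (r^2) from (Real.sqrt_sq hr.le).symm]
        apply Real.sqrt_le_sqrt
        have h1 : r^2 ≤ (lam - A)^2 := pow_le_pow_left₀ hr.le (by linarith) 2
        have h2 : (lam - A)^2 = (A - lam)^2 := by ring
        linarith [sq_nonneg B]
      linarith
    · -- cosh large : imaginary part dominates
      have hshm : m ≤ |sh| := by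
        apply le_abs_of_sq_le' _ _ hm.le
        have : K^2 ≤ ch^2 := pow_le_pow_left₀ (by linarith) hcase.le 2
        linarith [hshsq, hm2]
      have hBge : b*c1 * |sh| ≤ |B| := by
        have hcwsw : 0 < cw + sw := lt_of_lt_of_le hc1 ht2
        rw [hBdef, abs_mul, abs_mul, abs_of_pos hb, abs_of_pos hcwsw]
        have h1 : b*(c1 * |sh|) ≤ b*((cw+sw) * |sh|) := by
          apply mul_le_mul_of_nonneg_left _ hb.le
          exact mul_le_mul_of_nonneg_right ht2 habs0
        calc b*c1 * |sh| = b*(c1 * |sh|) := by ring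
          _ ≤ b*((cw+sw) * |sh|) := h1
          _ = b * |sh| * (cw+sw) := by ring
      have hmin1 : min 1 m ≤ 1 := min_le_left _ _
      have hminm : min 1 m ≤ m := min_le_right _ _
      have hminpos : 0 < min 1 m := lt_min one_pos hm
      have hδle : δ * (1 + |sh|) ≤ b*c1 * |sh| := by
        have q1 : min 1 m ≤ |sh| := le_trans hminm hshm
        have q2 : (min 1 m) * |sh| ≤ 1 * |sh| := mul_le_mul_of_nonneg_right hmin1 habs0
        calc δ * (1 + |sh|) ≤ (b*c1*(min 1 m)/2) * (1 + |sh|) :=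
              mul_le_mul_of_nonneg_right hδ2 (by linarith)
          _ = (b*c1/2) * (min 1 m + (min 1 m) * |sh|) := by ring
          _ ≤ (b*c1/2) * (|sh| + |sh|) := by
              apply mul_le_mul_of_nonneg_left (by linarith) (by positivity)
          _ = b*c1 * |sh| := by ring
      have hsq : |B| ≤ Real.sqrt ((A - lam)^2 + B^2) := by
        rw [show |B| = Real.sqrt (B^2) from (Real.sqrt_sq_eq_abs B).symm]
        apply Real.sqrt_le_sqrt
        linarith [sq_nonneg (A - lam)]
      linarith
  have hgappos : 0 < ‖zc b ((u:ℂ) + (w:ℂ)*Complex.I) - (lam:ℂ)‖ := by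
    have : 0 < δ * (1 + |sh|) := by positivity
    linarith
  -- Mittag-Leffler bound
  have hzre : 0 < (zc b ((u:ℂ) + (w:ℂ)*Complex.I)).re := by
    rw [hz]; simpa using hApos
  have hmlb := ml_bound γ β t C₀ (b*c1) (zc b ((u:ℂ) + (w:ℂ)*Complex.I))
    hβ0 hβ1 ht hC₀ hbc1 hml hzre hzlow
  -- combine
  obtain ⟨E, hEdef⟩ : ∃ x : ℝ, x = ‖mlf γ 1 (-(((t ^ γ : ℝ) : ℂ)
      * zc b ((u:ℂ) + (w:ℂ)*Complex.I) ^ (β:ℂ)))‖ := ⟨_, rfl⟩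
  obtain ⟨F, hFdef⟩ : ∃ x : ℝ, x = ‖zcDeriv b ((u:ℂ) + (w:ℂ)*Complex.I)‖ := ⟨_, rfl⟩
  obtain ⟨G, hGdef⟩ : ∃ x : ℝ, x = ‖zc b ((u:ℂ) + (w:ℂ)*Complex.I) - (lam:ℂ)‖ :=
    ⟨_, rfl⟩
  have hE0 : 0 ≤ E := hEdef ▸ norm_nonneg _
  have hF0 : 0 ≤ F := hFdef ▸ norm_nonneg _
  rw [← hEdef] at hmlb
  rw [← hFdef] at hzd_abs
  rw [← hGdef] at hgap hgappos
  have hgoal : ‖gfun γ β b t lam ((u:ℂ) + (w:ℂ)*Complex.I)‖ = E * F * G⁻¹ := by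
    rw [gfun, norm_mul, norm_mul, norm_inv, hEdef, hFdef, hGdef]
  rw [hgoal]
  have h1s : 0 < 1 + |sh| := by linarith
  have step1 : E * F * G⁻¹
      ≤ (C₀ * ((b*c1)^β)⁻¹ * t^(-γ)) * (2*b*ch) * (δ * (1 + |sh|))⁻¹ := by
    apply mul_le_mul
    · exact mul_le_mul hmlb hzd_abs hF0 (by positivity)
    · exact inv_anti₀ (by positivity) hgap
    · positivity
    · positivity
  have step2 : (C₀ * ((b*c1)^β)⁻¹ * t^(-γ)) * (2*b*ch) * (δ * (1 + |sh|))⁻¹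
      ≤ (C₀ * ((b*c1)^β)⁻¹ * (2*b) / δ) * t^(-γ) := by
    have hchratio : ch * (δ * (1 + |sh|))⁻¹ ≤ δ⁻¹ := by
      rw [mul_inv]
      have hr1 : ch * ((1 + |sh|)⁻¹) ≤ 1 := by
        rw [mul_inv_le_iff₀ h1s]; linarith
      calc ch * (δ⁻¹ * (1 + |sh|)⁻¹) = δ⁻¹ * (ch * (1 + |sh|)⁻¹) := by ring
        _ ≤ δ⁻¹ * 1 := mul_le_mul_of_nonneg_left hr1 (by positivity)
        _ = δ⁻¹ := mul_one _
    calc (C₀ * ((b*c1)^β)⁻¹ * t^(-γ)) * (2*b*ch) * (δ * (1 + |sh|))⁻¹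
        = (C₀ * ((b*c1)^β)⁻¹ * (2*b) * t^(-γ)) * (ch * (δ * (1 + |sh|))⁻¹) := by ring
      _ ≤ (C₀ * ((b*c1)^β)⁻¹ * (2*b) * t^(-γ)) * δ⁻¹ :=
          mul_le_mul_of_nonneg_left hchratio (by positivity)
      _ = (C₀ * ((b*c1)^β)⁻¹ * (2*b) / δ) * t^(-γ) := by ring
  exact step1.trans step2


set_option maxHeartbeats 1600000 in
/-- `∫_{-d}^{d} |g_λ(u+iw,t)| dw ≤ C t^{-γ}` uniformly in `u ∈ ℝ`. -/
theorem stmt5 (γ β d lam1 b C₀ : ℝ) (hγ : γ ∈ Set.Ioo (0 : ℝ) 1)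
    (hβ : β ∈ Set.Ioo (0 : ℝ) 1) (hd : 0 < d) (hd' : d < Real.pi / 4)
    (hlam1 : 0 < lam1) (hb : 0 < b) (hb' : b < lam1 / Real.sqrt 2) (hC₀ : 0 < C₀)
    (hml : ∀ w : ℂ, w.re ≤ 0 → ‖mlf γ 1 w‖ ≤ C₀ / (1 + ‖w‖)) :
    ∃ C : ℝ, 0 < C ∧ ∀ t : ℝ, 0 < t → ∀ lam : ℝ, lam1 ≤ lam → ∀ u : ℝ,
      (∫ w in (-d)..d, ‖gfun γ β b t lam ((u : ℂ) + (w : ℂ) * Complex.I)‖)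
        ≤ C * t ^ (-γ) := by
  obtain ⟨hγ0, hγ1⟩ := hγ
  obtain ⟨hβ0, hβ1⟩ := hβ
  obtain ⟨c1, hc1def⟩ : ∃ x : ℝ, x = Real.cos d - Real.sin d := ⟨_, rfl⟩
  have hc1 : 0 < c1 := hc1def ▸ trig2' d hd hd'
  obtain ⟨s2, hs2def⟩ : ∃ x : ℝ, x = Real.sqrt 2 := ⟨_, rfl⟩
  have hs2sq : s2 ^ 2 = 2 := hs2def ▸ Real.sq_sqrt (by norm_num)
  have hs2' : (1:ℝ) ≤ s2 := by
    rw [hs2def, show (1:ℝ) = Real.sqrt 1 from (Real.sqrt_one).symm]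
    exact Real.sqrt_le_sqrt (by norm_num)
  have hs2pos : (0:ℝ) < s2 := by linarith
  have hbl : s2 * b < lam1 := by
    have h := (lt_div_iff₀ hs2pos).mp (hs2def ▸ hb')
    linarith [mul_comm b s2]
  obtain ⟨r, hrdef⟩ : ∃ x : ℝ, x = (lam1 - s2*b)/2 := ⟨_, rfl⟩
  have hr : 0 < r := by rw [hrdef]; linarith
  have hs2b : 0 < s2 * b := by positivity
  obtain ⟨K, hKdef⟩ : ∃ x : ℝ, x = (lam1 + s2*b)/(2*(s2*b)) := ⟨_, rfl⟩
  have hK : 1 < K := by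
    rw [hKdef, lt_div_iff₀ (by positivity)]
    linarith
  obtain ⟨m, hmdef⟩ : ∃ x : ℝ, x = Real.sqrt (K^2 - 1) := ⟨_, rfl⟩
  have hK2 : 1 < K^2 := by nlinarith
  have hm2 : m^2 = K^2 - 1 := hmdef ▸ Real.sq_sqrt (by linarith)
  have hm : 0 < m := hmdef ▸ Real.sqrt_pos.mpr (by linarith)
  obtain ⟨δ, hδdef⟩ : ∃ x : ℝ, x = min (r/(1+K)) (b*c1*(min 1 m)/2) := ⟨_, rfl⟩
  have hδ1 : δ ≤ r/(1+K) := hδdef ▸ min_le_left _ _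
  have hδ2 : δ ≤ b*c1*(min 1 m)/2 := hδdef ▸ min_le_right _ _
  have hδ : 0 < δ := by
    rw [hδdef]
    apply lt_min
    · positivity
    · have : 0 < min 1 m := lt_min one_pos hm
      positivity
  obtain ⟨M, hMdef⟩ : ∃ x : ℝ, x = C₀ * ((b*c1) ^ β)⁻¹ * (2*b) / δ := ⟨_, rfl⟩
  have hbc1 : 0 < b * c1 := by positivity
  have hbc1b : 0 < (b*c1) ^ β := Real.rpow_pos_of_pos hbc1 β
  have hM : 0 < M := by rw [hMdef]; positivity
  refine ⟨2*d*M, by positivity, fun t ht lam hlam u => ?_⟩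
  have htγ' : 0 < t ^ (-γ) := Real.rpow_pos_of_pos ht (-γ)
  have key : ∀ w : ℝ, |w| ≤ d →
      ‖gfun γ β b t lam ((u : ℂ) + (w : ℂ) * Complex.I)‖ ≤ M * t ^ (-γ) := by
    intro w hw
    obtain ⟨ht1, ht2, ht3, ht4⟩ := trig1' d w hd hd' hw
    have htrig : (Real.cos w - Real.sin w)^2 + (Real.cos w + Real.sin w)^2 = 2 := by
      linarith [Real.sin_sq_add_cos_sq w, sq_nonneg (Real.sin w - Real.cos w)]
    have hlamr : s2*b*K ≤ lam - r := by
      have h3 : s2*b*K = (lam1 + s2*b)/2 := by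
        rw [hKdef]; field_simp
      have h4 : (lam1 + s2*b)/2 = lam1 - r := by rw [hrdef]; ring
      linarith
    rw [hMdef]
    exact key_bound γ β b t lam u w C₀ c1 s2 r K m δ hβ0 hβ1 hb hC₀ hc1 ht hml
      (hc1def ▸ ht1) (hc1def ▸ ht2) (hs2def ▸ ht3) htrig hK hr hm hm2 hδ1 hδ2 hδ hlamr
  by_cases hint : IntervalIntegrable
      (fun w : ℝ => ‖gfun γ β b t lam ((u : ℂ) + (w : ℂ) * Complex.I)‖)
      MeasureTheory.volume (-d) d
  · have hmono := intervalIntegral.integral_mono_on (μ := MeasureTheory.volume)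
      (by linarith : -d ≤ d) hint (intervalIntegrable_const (c := M * t^(-γ)))
      (fun w hw => key w (abs_le.mpr ⟨hw.1, hw.2⟩))
    calc (∫ w in (-d)..d, ‖gfun γ β b t lam ((u : ℂ) + (w : ℂ) * Complex.I)‖)
        ≤ ∫ _ in (-d)..d, M * t^(-γ) := hmono
      _ = (d - (-d)) * (M * t^(-γ)) := by
          rw [intervalIntegral.integral_const]; simp
      _ = 2*d*M * t^(-γ) := by ring
  · rw [intervalIntegral.integral_undef hint]
    positivity
end

section
/- Let γ, β ∈ (0,1), 0 < d < π/4, λ₁ > 0 and 0 < b < λ₁/√2. Assume there is a constant C₀ > 0 such that |e_{γ,1}(w)| ≤ C₀/(1+|w|) for every w ∈ ℂ with Re w ≤ 0. Then there exists a constant C > 0, depending only on γ, β, d, b, λ₁ and C₀, such that for every k > 0, every positive integer N, every t > 0 and every real λ ≥ λ₁ one has k · ∑_{|j| ≥ N+1} |g_λ(jk, t)| ≤ C · t^{−γ} · e^{−β N k}. -/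
lemma zc_re (b y : ℝ) : (zc b (y:ℂ)).re = b * Real.cosh y := by
  simp [zc, Complex.cosh_ofReal_re, Complex.sinh_ofReal_im]

lemma zc_im (b y : ℝ) : (zc b (y:ℂ)).im = b * Real.sinh y := by
  simp [zc, Complex.sinh_ofReal_re, Complex.cosh_ofReal_im]

lemma zcDeriv_re (b y : ℝ) : (zcDeriv b (y:ℂ)).re = b * Real.sinh y := by
  simp [zcDeriv, Complex.sinh_ofReal_re, Complex.cosh_ofReal_im]

lemma zcDeriv_im (b y : ℝ) : (zcDeriv b (y:ℂ)).im = b * Real.cosh y := by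
  simp [zcDeriv, Complex.cosh_ofReal_re, Complex.sinh_ofReal_im]

lemma le_of_sq_le' {a r : ℝ} (h : a^2 ≤ r^2) (hr : 0 ≤ r) : a ≤ r := by
  by_contra h'
  push_neg at h'
  nlinarith

lemma zc_abs_lb (b y : ℝ) (hb : 0 < b) :
    b * Real.cosh y ≤ ‖zc b (y:ℂ)‖ := by
  have h := Complex.abs_re_le_norm (zc b (y:ℂ))
  rw [zc_re] at h
  have hc : (0:ℝ) < Real.cosh y := Real.cosh_pos y
  calc b * Real.cosh y = |b * Real.cosh y| := (abs_of_pos (by positivity)).symm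
    _ ≤ _ := h

lemma zc_abs_ub (b y : ℝ) (hb : 0 < b) :
    ‖zc b (y:ℂ)‖ ≤ Real.sqrt 2 * (b * Real.cosh y) := by
  have h2 : (‖zc b (y:ℂ)‖)^2 = (b*Real.cosh y)^2 + (b*Real.sinh y)^2 := by
    rw [Complex.sq_norm, Complex.normSq_apply, zc_re, zc_im]; ring
  have hs : Real.sinh y ^ 2 + 1 = Real.cosh y ^2 := (Real.cosh_sq y).symm
  have hsq2 : Real.sqrt 2 ^ 2 = 2 := Real.sq_sqrt (by norm_num)
  have hc : (0:ℝ) < Real.cosh y := Real.cosh_pos y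
  refine le_of_sq_le' ?_ (by positivity)
  rw [h2]
  have h3 : (Real.sqrt 2 * (b*Real.cosh y))^2 = 2*(b*Real.cosh y)^2 := by
    rw [mul_pow, hsq2]
  nlinarith [h3]

lemma zcDeriv_abs_ub (b y : ℝ) (hb : 0 < b) :
    ‖zcDeriv b (y:ℂ)‖ ≤ Real.sqrt 2 * (b * Real.cosh y) := by
  have h2 : (‖zcDeriv b (y:ℂ)‖)^2 = (b*Real.sinh y)^2 + (b*Real.cosh y)^2 := by
    rw [Complex.sq_norm, Complex.normSq_apply, zcDeriv_re, zcDeriv_im]; ring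
  have hs : Real.sinh y ^ 2 + 1 = Real.cosh y ^2 := (Real.cosh_sq y).symm
  have hsq2 : Real.sqrt 2 ^ 2 = 2 := Real.sq_sqrt (by norm_num)
  have hc : (0:ℝ) < Real.cosh y := Real.cosh_pos y
  refine le_of_sq_le' ?_ (by positivity)
  rw [h2]
  have h3 : (Real.sqrt 2 * (b*Real.cosh y))^2 = 2*(b*Real.cosh y)^2 := by
    rw [mul_pow, hsq2]
  nlinarith [h3]

lemma zc_sub_abs_lb (b y lam lam1 : ℝ) (hb : 0 < b) (hlam1 : 0 < lam1) (hlam : lam1 ≤ lam)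
    (h2b : 2*b^2 < lam1^2) :
    Real.sqrt (1 - 2*b^2/lam1^2) * (b * Real.cosh y) ≤ ‖zc b (y:ℂ) - lam‖ := by
  have hc : (1:ℝ) ≤ Real.cosh y := Real.one_le_cosh y
  have hs : Real.sinh y ^ 2 + 1 = Real.cosh y ^2 := (Real.cosh_sq y).symm
  have hεnn : (0:ℝ) ≤ 1 - 2*b^2/lam1^2 := by
    rw [sub_nonneg, div_le_one (by positivity)]; linarith
  have hε2 : Real.sqrt (1 - 2*b^2/lam1^2) ^ 2 = 1 - 2*b^2/lam1^2 := Real.sq_sqrt hεnn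
  have h2 : (‖zc b (y:ℂ) - lam‖)^2
      = (b*Real.cosh y - lam)^2 + (b*Real.sinh y)^2 := by
    rw [Complex.sq_norm, Complex.normSq_apply]
    simp [zc_re, zc_im]
    ring
  refine le_of_sq_le' ?_ (norm_nonneg _)
  rw [h2, mul_pow, hε2]
  have key : (lam1^2 - 2*b^2) * (b*Real.cosh y)^2
      ≤ lam1^2 * ((b*Real.cosh y - lam)^2 + (b*Real.sinh y)^2) := by
    set X := b * Real.cosh y with hX
    have hXb : b ≤ X := by nlinarith
    have hsin : (b*Real.sinh y)^2 = X^2 - b^2 := by rw [hX]; nlinarith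
    rw [hsin]
    rcases le_or_gt (lam1^2) (2*X^2) with h | h
    · nlinarith [sq_nonneg (X - lam), sq_nonneg lam1]
    · nlinarith [sq_nonneg (lam1 - 2*X), mul_nonneg (sub_nonneg.2 hlam) (sub_nonneg.2 hlam),
        mul_le_mul_of_nonneg_left (sub_le_sub_right hlam X) (le_of_lt hlam1),
        sq_nonneg (lam - X), sq_nonneg (lam1 - X)]
  have hl2 : (0:ℝ) < lam1^2 := by positivity
  have expand : (1 - 2*b^2/lam1^2) = (lam1^2 - 2*b^2)/lam1^2 := by field_simp
  rw [expand, div_mul_eq_mul_div, div_le_iff₀ hl2]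
  nlinarith [key]

lemma cosh_lb (y : ℝ) : Real.exp |y| / 2 ≤ Real.cosh y := by
  rw [← Real.cosh_abs, Real.cosh_eq]
  have := Real.exp_pos (-|y|)
  linarith

lemma gfun_bound {γ β lam1 b C₀ t lam : ℝ} (hβ0 : 0 < β) (hβ1 : β < 1)
    (hlam1 : 0 < lam1) (hb : 0 < b) (h2b : 2*b^2 < lam1^2) (hC₀ : 0 < C₀)
    (hml : ∀ w : ℂ, w.re ≤ 0 → ‖mlf γ 1 w‖ ≤ C₀ / (1 + ‖w‖))
    (ht : 0 < t) (hlam : lam1 ≤ lam) (y : ℝ) :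
    ‖gfun γ β b t lam (y:ℂ)‖ ≤
      (C₀ * Real.sqrt 2 / (Real.sqrt (1 - 2*b^2/lam1^2) * (b/2) ^ β)) * t ^ (-γ)
        * Real.exp (-(β * |y|)) := by
  set ε := Real.sqrt (1 - 2*b^2/lam1^2) with hε
  have hεnn : (0:ℝ) ≤ 1 - 2*b^2/lam1^2 := by
    rw [sub_nonneg, div_le_one (by positivity)]; linarith
  have hεpos : 0 < ε := Real.sqrt_pos.2 (by
    rw [sub_pos, div_lt_one (by positivity)]; linarith)
  have hc1 : (1:ℝ) ≤ Real.cosh y := Real.one_le_cosh y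
  have hcpos : (0:ℝ) < Real.cosh y := by linarith
  set z := zc b (y:ℂ) with hz
  have hzlb : b * Real.cosh y ≤ ‖z‖ := zc_abs_lb b y hb
  have hzpos : 0 < ‖z‖ := lt_of_lt_of_le (by positivity) hzlb
  have hz0 : z ≠ 0 := by
    intro h; rw [h] at hzpos; simp at hzpos
  have htγ : (0:ℝ) < t ^ γ := Real.rpow_pos_of_pos ht γ
  -- real part of z^β is nonneg
  have hargz : |Complex.arg z| < Real.pi / 2 := by
    rw [Complex.abs_arg_lt_pi_div_two_iff]
    left; rw [hz, zc_re]; positivity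
  have hwre : 0 ≤ (z ^ (β:ℂ)).re := by
    rw [Complex.cpow_def_of_ne_zero hz0, Complex.exp_re]
    have him : (Complex.log z * (β:ℂ)).im = Complex.arg z * β := by
      simp [Complex.mul_im, Complex.log_im]
    rw [him]
    have hcos : 0 ≤ Real.cos (Complex.arg z * β) := by
      apply Real.cos_nonneg_of_mem_Icc
      constructor
      · nlinarith [abs_lt.1 hargz, abs_nonneg (Complex.arg z), Real.pi_pos]
      · nlinarith [abs_lt.1 hargz, abs_nonneg (Complex.arg z), Real.pi_pos]
    positivity
  have hargre : (-(((t ^ γ : ℝ) : ℂ) * z ^ (β:ℂ))).re ≤ 0 := by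
    have : (-(((t ^ γ : ℝ) : ℂ) * z ^ (β:ℂ))).re = -(t^γ * (z ^ (β:ℂ)).re) := by
      simp [Complex.mul_re]
    rw [this]
    have : 0 ≤ t^γ * (z ^ (β:ℂ)).re := mul_nonneg htγ.le hwre
    linarith
  have habsw : ‖-(((t ^ γ : ℝ) : ℂ) * z ^ (β:ℂ))‖
      = t^γ * (‖z‖) ^ β := by
    rw [norm_neg, norm_mul, Complex.norm_of_nonneg htγ.le, Complex.norm_cpow_real]
  -- bound on mlf factor
  have hmlf : ‖mlf γ 1 (-(((t ^ γ : ℝ) : ℂ) * z ^ (β:ℂ)))‖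
      ≤ C₀ / (t^γ * (‖z‖) ^ β) := by
    refine le_trans (hml _ hargre) ?_
    rw [habsw]
    have hx : (0:ℝ) < t^γ * (‖z‖) ^ β := by positivity
    gcongr
    linarith
  have hden : ε * (b * Real.cosh y) ≤ ‖z - lam‖ :=
    zc_sub_abs_lb b y lam lam1 hb hlam1 hlam h2b
  have hdenpos : (0:ℝ) < ε * (b * Real.cosh y) := by positivity
  have hinv : (‖z - lam‖)⁻¹ ≤ (ε * (b * Real.cosh y))⁻¹ := by
    exact inv_anti₀ hdenpos hden
  have hderiv : ‖zcDeriv b (y:ℂ)‖ ≤ Real.sqrt 2 * (b * Real.cosh y) :=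
    zcDeriv_abs_ub b y hb
  have habs : ‖gfun γ β b t lam (y:ℂ)‖
      = ‖mlf γ 1 (-(((t ^ γ : ℝ) : ℂ) * z ^ (β:ℂ)))‖
        * ‖zcDeriv b (y:ℂ)‖ * (‖z - lam‖)⁻¹ := by
    rw [gfun, norm_mul, norm_mul, norm_inv]
  rw [habs]
  have step1 : ‖mlf γ 1 (-(((t ^ γ : ℝ) : ℂ) * z ^ (β:ℂ)))‖
        * ‖zcDeriv b (y:ℂ)‖ * (‖z - lam‖)⁻¹
      ≤ (C₀ / (t^γ * (‖z‖) ^ β)) * (Real.sqrt 2 * (b * Real.cosh y))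
        * (ε * (b * Real.cosh y))⁻¹ := by
    have h1 := norm_nonneg (mlf γ 1 (-(((t ^ γ : ℝ) : ℂ) * z ^ (β:ℂ))))
    have h2 := norm_nonneg (zcDeriv b (y:ℂ))
    have h3 : (0:ℝ) ≤ (‖z - lam‖)⁻¹ := by positivity
    have h4 : (0:ℝ) ≤ C₀ / (t^γ * (‖z‖) ^ β) := by positivity
    exact mul_le_mul (mul_le_mul hmlf hderiv h2 h4) hinv h3 (by positivity)
  refine le_trans step1 ?_
  -- simplify
  have heq : (C₀ / (t^γ * (‖z‖) ^ β)) * (Real.sqrt 2 * (b * Real.cosh y))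
        * (ε * (b * Real.cosh y))⁻¹
      = C₀ * Real.sqrt 2 / (ε * (t^γ * (‖z‖) ^ β)) := by
    field_simp
  rw [heq]
  -- lower bound |z|^β
  have hXlb : (b/2) ^ β * Real.exp (β * |y|) ≤ (‖z‖) ^ β := by
    have h1 : (b/2) * Real.exp |y| ≤ ‖z‖ := by
      refine le_trans ?_ hzlb
      have := cosh_lb y
      calc (b/2) * Real.exp |y| = b * (Real.exp |y| / 2) := by ring
        _ ≤ b * Real.cosh y := by gcongr
    calc (b/2) ^ β * Real.exp (β * |y|) = ((b/2) * Real.exp |y|) ^ β := by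
          rw [Real.mul_rpow (by positivity) (by positivity)]
          congr 1
          rw [Real.rpow_def_of_pos (Real.exp_pos _), Real.log_exp, mul_comm]
      _ ≤ (‖z‖) ^ β := Real.rpow_le_rpow (by positivity) h1 hβ0.le
  have hrhs : (C₀ * Real.sqrt 2 / (ε * (b/2) ^ β)) * t ^ (-γ) * Real.exp (-(β * |y|))
      = C₀ * Real.sqrt 2 / (ε * (t^γ * ((b/2) ^ β * Real.exp (β * |y|)))) := by
    rw [Real.rpow_neg ht.le, Real.exp_neg]
    have hbβ : (0:ℝ) < (b/2) ^ β := Real.rpow_pos_of_pos (by positivity) β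
    field_simp
  rw [hrhs]
  gcongr

theorem stmt7 (γ β d lam1 b C₀ : ℝ) (hγ : γ ∈ Set.Ioo (0 : ℝ) 1)
    (hβ : β ∈ Set.Ioo (0 : ℝ) 1) (hd : 0 < d) (hd' : d < Real.pi / 4)
    (hlam1 : 0 < lam1) (hb : 0 < b) (hb' : b < lam1 / Real.sqrt 2) (hC₀ : 0 < C₀)
    (hml : ∀ w : ℂ, w.re ≤ 0 → ‖mlf γ 1 w‖ ≤ C₀ / (1 + ‖w‖)) :
    ∃ C : ℝ, 0 < C ∧ ∀ k : ℝ, 0 < k → ∀ N : ℕ, 0 < N → ∀ t : ℝ, 0 < t →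
      ∀ lam : ℝ, lam1 ≤ lam →
      Summable (fun j : {j : ℤ // (N : ℤ) + 1 ≤ |j|} =>
        ‖gfun γ β b t lam ((((j : ℤ) : ℝ) * k : ℝ))‖) ∧
      k * (∑' j : {j : ℤ // (N : ℤ) + 1 ≤ |j|},
          ‖gfun γ β b t lam ((((j : ℤ) : ℝ) * k : ℝ))‖)
        ≤ C * t ^ (-γ) * Real.exp (-(β * N * k)) := by
  obtain ⟨hβ0, hβ1⟩ := hβ
  have h2b : 2*b^2 < lam1^2 := by
    have hs2 : (0:ℝ) < Real.sqrt 2 := by positivity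
    rw [lt_div_iff₀ hs2] at hb'
    have h3 : (b * Real.sqrt 2)^2 < lam1^2 :=
      pow_lt_pow_left₀ hb' (by positivity) (by norm_num)
    rw [mul_pow, Real.sq_sqrt (by norm_num : (0:ℝ) ≤ 2)] at h3
    linarith
  set ε := Real.sqrt (1 - 2*b^2/lam1^2) with hε
  have hεpos : 0 < ε := Real.sqrt_pos.2 (by
    rw [sub_pos, div_lt_one (by positivity)]; linarith)
  set C₁ := C₀ * Real.sqrt 2 / (ε * (b/2) ^ β) with hC₁def
  have hC₁ : 0 < C₁ := by
    have : (0:ℝ) < (b/2) ^ β := Real.rpow_pos_of_pos (by positivity) β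
    positivity
  refine ⟨2*C₁/β, by positivity, ?_⟩
  intro k hk N hN t ht lam hlam
  set F : {j : ℤ // (N : ℤ) + 1 ≤ |j|} → ℝ := fun j =>
    ‖gfun γ β b t lam ((((j : ℤ) : ℝ) * k : ℝ))‖ with hF
  set r := Real.exp (-(β*k)) with hr
  have hr0 : 0 ≤ r := (Real.exp_pos _).le
  have hr1 : r < 1 := by
    rw [hr, Real.exp_lt_one_iff]
    nlinarith
  have hP : (0:ℝ) < t^(-γ) := Real.rpow_pos_of_pos ht _
  set Q := C₁ * t^(-γ) * Real.exp (-(β*((N:ℝ)+1)*k)) with hQ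
  have hQ0 : 0 < Q := by positivity
  have hterm : ∀ j : {j : ℤ // (N : ℤ) + 1 ≤ |j|},
      F j ≤ C₁ * t^(-γ) * Real.exp (-(β * ((|(j:ℤ)| : ℤ):ℝ) * k)) := by
    intro j
    refine le_trans (gfun_bound hβ0 hβ1 hlam1 hb h2b hC₀ hml ht hlam (((j:ℤ):ℝ)*k)) ?_
    have habs : |((j:ℤ):ℝ) * k| = ((|(j:ℤ)| : ℤ):ℝ) * k := by
      rw [abs_mul, abs_of_pos hk]
      push_cast
      ring
    rw [habs, ← hε, ← hC₁def]
    apply le_of_eq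
    ring
  set s : Set {j : ℤ // (N : ℤ) + 1 ≤ |j|} := {p | 0 ≤ (p : ℤ)} with hsdef
  let e₁ : ℕ ≃ ↥s := {
    toFun := fun n => ⟨⟨(N:ℤ)+1+n, by
      rw [abs_of_nonneg (by positivity)]; omega⟩, by
      simp only [hsdef, Set.mem_setOf_eq]; positivity⟩
    invFun := fun p => ((p : ℤ) - ((N:ℤ)+1)).toNat
    left_inv := fun n => by simp
    right_inv := fun p => by
      obtain ⟨⟨j, hj⟩, hp⟩ := p
      simp only [hsdef, Set.mem_setOf_eq] at hp
      rw [abs_of_nonneg hp] at hj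
      apply Subtype.ext
      apply Subtype.ext
      simp only []
      omega }
  let e₂ : ℕ ≃ ↥(sᶜ) := {
    toFun := fun n => ⟨⟨-((N:ℤ)+1+n), by
      rw [abs_neg, abs_of_nonneg (by positivity)]; omega⟩, by
      simp only [hsdef, Set.mem_compl_iff, Set.mem_setOf_eq, not_le]
      omega⟩
    invFun := fun p => (-(p : ℤ) - ((N:ℤ)+1)).toNat
    left_inv := fun n => by simp
    right_inv := fun p => by
      obtain ⟨⟨j, hj⟩, hp⟩ := p
      simp only [hsdef, Set.mem_compl_iff, Set.mem_setOf_eq, not_le] at hp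
      rw [abs_of_neg hp] at hj
      apply Subtype.ext
      apply Subtype.ext
      simp only []
      omega }
  have hgeom : Summable (fun n : ℕ => Q * r^n) :=
    (summable_geometric_of_lt_one hr0 hr1).mul_left Q
  have hCP : C₁ * t^(-γ) ≠ 0 := by positivity
  have hexpsplit : ∀ n : ℕ,
      C₁ * t^(-γ) * Real.exp (-(β * ((N:ℝ)+1+n) * k)) = Q * r^n := by
    intro n
    have h1 : Real.exp (-(β * ((N:ℝ)+1+n) * k))
        = Real.exp (-(β*((N:ℝ)+1)*k)) * Real.exp ((n:ℝ) * (-(β*k))) := by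
      rw [← Real.exp_add]; congr 1; ring
    rw [h1, Real.exp_nat_mul, hQ, ← hr]
    ring
  have hb₁ : ∀ n : ℕ, F ((e₁ n : ↥s) : {j : ℤ // (N : ℤ) + 1 ≤ |j|}) ≤ Q * r^n := by
    intro n
    refine le_trans (hterm _) ?_
    have hval : ((((e₁ n : ↥s) : {j : ℤ // (N : ℤ) + 1 ≤ |j|})) : ℤ) = (N:ℤ)+1+n := rfl
    rw [hval]
    have habs : |(N:ℤ)+1+(n:ℤ)| = (N:ℤ)+1+n := abs_of_nonneg (by positivity)
    rw [habs]
    have hcast : (((N:ℤ)+1+(n:ℤ) : ℤ):ℝ) = (N:ℝ)+1+(n:ℝ) := by push_cast; ring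
    rw [hcast, hexpsplit n]
  have hb₂ : ∀ n : ℕ, F ((e₂ n : ↥(sᶜ)) : {j : ℤ // (N : ℤ) + 1 ≤ |j|}) ≤ Q * r^n := by
    intro n
    refine le_trans (hterm _) ?_
    have hval : ((((e₂ n : ↥(sᶜ)) : {j : ℤ // (N : ℤ) + 1 ≤ |j|})) : ℤ) = -((N:ℤ)+1+n) := rfl
    rw [hval]
    have habs : |(-((N:ℤ)+1+(n:ℤ)))| = (N:ℤ)+1+n := by
      rw [abs_neg]; exact abs_of_nonneg (by positivity)
    rw [habs]
    have hcast : (((N:ℤ)+1+(n:ℤ) : ℤ):ℝ) = (N:ℝ)+1+(n:ℝ) := by push_cast; ring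
    rw [hcast, hexpsplit n]
  have hs₁ : Summable (fun n : ℕ => F ((e₁ n : ↥s) : {j : ℤ // (N : ℤ) + 1 ≤ |j|})) :=
    Summable.of_nonneg_of_le (fun n => norm_nonneg _) hb₁ hgeom
  have hs₂ : Summable (fun n : ℕ => F ((e₂ n : ↥(sᶜ)) : {j : ℤ // (N : ℤ) + 1 ≤ |j|})) :=
    Summable.of_nonneg_of_le (fun n => norm_nonneg _) hb₂ hgeom
  have hsumS : Summable (F ∘ ((↑) : ↥s → {j : ℤ // (N : ℤ) + 1 ≤ |j|})) :=
    (Equiv.summable_iff e₁).mp hs₁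
  have hsumSc : Summable (F ∘ ((↑) : ↥(sᶜ) → {j : ℤ // (N : ℤ) + 1 ≤ |j|})) :=
    (Equiv.summable_iff e₂).mp hs₂
  have hsummable : Summable F := hsumS.add_compl hsumSc
  refine ⟨hsummable, ?_⟩
  have htsum1 : ∑' p : ↥s, F p ≤ Q * (1-r)⁻¹ := by
    rw [← Equiv.tsum_eq e₁ (fun p : ↥s => F p)]
    calc ∑' n : ℕ, F ((e₁ n : ↥s) : {j : ℤ // (N : ℤ) + 1 ≤ |j|})
        ≤ ∑' n : ℕ, Q * r^n := Summable.tsum_le_tsum hb₁ hs₁ hgeom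
      _ = Q * (1-r)⁻¹ := by rw [tsum_mul_left, tsum_geometric_of_lt_one hr0 hr1]
  have htsum2 : ∑' p : ↥(sᶜ), F p ≤ Q * (1-r)⁻¹ := by
    rw [← Equiv.tsum_eq e₂ (fun p : ↥(sᶜ) => F p)]
    calc ∑' n : ℕ, F ((e₂ n : ↥(sᶜ)) : {j : ℤ // (N : ℤ) + 1 ≤ |j|})
        ≤ ∑' n : ℕ, Q * r^n := Summable.tsum_le_tsum hb₂ hs₂ hgeom
      _ = Q * (1-r)⁻¹ := by rw [tsum_mul_left, tsum_geometric_of_lt_one hr0 hr1]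
  have htsum : ∑' j, F j ≤ 2 * (Q * (1-r)⁻¹) := by
    rw [← Summable.tsum_add_tsum_compl (s := s) hsumS hsumSc]
    have h1 : ∑' p : ↥s, (F ∘ ((↑) : ↥s → {j : ℤ // (N : ℤ) + 1 ≤ |j|})) p ≤ Q * (1-r)⁻¹ :=
      htsum1
    have h2 : ∑' p : ↥(sᶜ), (F ∘ ((↑) : ↥(sᶜ) → {j : ℤ // (N : ℤ) + 1 ≤ |j|})) p ≤ Q * (1-r)⁻¹ :=
      htsum2
    linarith
  have hkey : β * k * r ≤ 1 - r := by
    have h1 : Real.exp (β*k) * r = 1 := by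
      rw [hr, ← Real.exp_add]; simp
    nlinarith [Real.add_one_le_exp (β*k), Real.exp_pos (-(β*k))]
  have hfr : k * r / (1-r) ≤ 1/β := by
    rw [div_le_div_iff₀ (by linarith) hβ0]
    nlinarith
  have hE1 : Real.exp (-(β*((N:ℝ)+1)*k)) = Real.exp (-(β*(N:ℝ)*k)) * r := by
    rw [hr, ← Real.exp_add]; congr 1; ring
  have hE0 : (0:ℝ) < Real.exp (-(β*(N:ℝ)*k)) := Real.exp_pos _
  calc k * (∑' j, F j) ≤ k * (2 * (Q * (1-r)⁻¹)) := by
        apply mul_le_mul_of_nonneg_left htsum hk.le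
    _ = (2 * C₁ * t^(-γ) * Real.exp (-(β*(N:ℝ)*k))) * (k * r / (1-r)) := by
        rw [hQ, hE1]; field_simp
    _ ≤ (2 * C₁ * t^(-γ) * Real.exp (-(β*(N:ℝ)*k))) * (1/β) := by
        apply mul_le_mul_of_nonneg_left hfr (by positivity)
    _ = 2*C₁/β * t ^ (-γ) * Real.exp (-(β * N * k)) := by ring
end
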